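/- Let x be a Harris tree with n = #x nodes. Then ∑_{(u,v)∈x×x} |u∧v| = ∑_{u∈x} (#x(u))² − n², where u∧v denotes the longest common prefix of u and v, and consequently the Wiener index WI(x) := (1/2)∑_{(u,v)∈x×x}(|u| + |v| − 2|u∧v|) satisfies WI(x) = n·TPL(x) + n² − ∑_{u∈x} (#x(u))², where TPL(x) = ∑_{u∈x} |u|. -/

import Mathlib

/-- The longest common prefix of two lists. -/
def lcp : List ℕ+ → List ℕ+ → List ℕ+
  | a :: as, b :: bs => if a = b then a :: lcp as bs else []
  | _, _ => []

theorem lcp_prefix_left : ∀ (u v : List ℕ+), lcp u v <+: u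
  | [], _ => by simp [lcp]
  | _ :: _, [] => by simp [lcp]
  | a :: as, b :: bs => by
      simp only [lcp]
      split
      · next h =>
        subst h
        exact List.cons_prefix_cons.mpr ⟨rfl, lcp_prefix_left as bs⟩
      · exact List.nil_prefix

theorem lcp_prefix_right : ∀ (u v : List ℕ+), lcp u v <+: v
  | [], _ => by simp [lcp]
  | _ :: _, [] => by simp [lcp]
  | a :: as, b :: bs => by
      simp only [lcp]
      split
      · next h =>
        subst h
        exact List.cons_prefix_cons.mpr ⟨rfl, lcp_prefix_right as bs⟩
      · exact List.nil_prefix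

theorem prefix_lcp : ∀ (w u v : List ℕ+), w <+: u → w <+: v → w <+: lcp u v
  | [], _, _, _, _ => List.nil_prefix
  | c :: cs, u, v, hu, hv => by
      obtain ⟨u', rfl⟩ := hu
      obtain ⟨v', rfl⟩ := hv
      simp only [List.cons_append, lcp, if_pos rfl]
      exact List.cons_prefix_cons.mpr
        ⟨rfl, prefix_lcp cs _ _ (List.prefix_append _ _) (List.prefix_append _ _)⟩

theorem prefix_lcp_iff (w u v : List ℕ+) :
    w <+: lcp u v ↔ w <+: u ∧ w <+: v :=
  ⟨fun h => ⟨h.trans (lcp_prefix_left u v), h.trans (lcp_prefix_right u v)⟩,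
   fun ⟨h1, h2⟩ => prefix_lcp w u v h1 h2⟩

theorem count_prefixes (x : Finset (List ℕ+)) (l : List ℕ+)
    (hmem : ∀ w : List ℕ+, w <+: l → w ∈ x) :
    (x.filter fun w => w <+: l ∧ w ≠ []).card = l.length := by
  have : (x.filter fun w => w <+: l ∧ w ≠ []) =
      (Finset.range l.length).image (fun k => l.take (k + 1)) := by
    ext w
    simp only [Finset.mem_filter, Finset.mem_image, Finset.mem_range]
    constructor
    · rintro ⟨-, hw, hne⟩
      refine ⟨w.length - 1, ?_, ?_⟩
      · have h1 : 1 ≤ w.length := List.length_pos_iff.mpr hne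
        have h2 : w.length ≤ l.length := hw.length_le
        omega
      · have h1 : 1 ≤ w.length := List.length_pos_iff.mpr hne
        have : w.length - 1 + 1 = w.length := by omega
        rw [this]
        exact (List.prefix_iff_eq_take.mp hw).symm
    · rintro ⟨k, hk, rfl⟩
      have hp : l.take (k + 1) <+: l := List.take_prefix _ _
      refine ⟨hmem _ hp, hp, ?_⟩
      have : (l.take (k + 1)).length = k + 1 := by
        rw [List.length_take]; omega
      intro h
      rw [h] at this
      simp at this
  rw [this, Finset.card_image_of_injOn, Finset.card_range]
  intro a ha b hb hab
  simp only [Finset.mem_coe, Finset.mem_range] at ha hb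
  have hab' : l.take (a + 1) = l.take (b + 1) := hab
  have ha' : (l.take (a + 1)).length = a + 1 := by rw [List.length_take]; omega
  have hb' : (l.take (b + 1)).length = b + 1 := by rw [List.length_take]; omega
  rw [hab'] at ha'
  omega

theorem harris_wiener_identity
    (x : Finset (List ℕ+)) (hne : x.Nonempty)
    (h1 : ∀ u w : List ℕ+, u <+: w → w ∈ x → u ∈ x)
    (h2 : ∀ (u : List ℕ+) (i : ℕ+), 1 < i → u ++ [i] ∈ x →
      ∀ j : ℕ+, j < i → u ++ [j] ∈ x) :
    (∑ u ∈ x, ∑ v ∈ x, ((lcp u v).length : ℝ)) =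
      (∑ u ∈ x, ((x.filter fun v => u <+: v).card : ℝ) ^ 2) - (x.card : ℝ) ^ 2 ∧
    (1 / 2 : ℝ) * ∑ u ∈ x, ∑ v ∈ x,
        ((u.length : ℝ) + (v.length : ℝ) - 2 * (lcp u v).length) =
      (x.card : ℝ) * (∑ u ∈ x, (u.length : ℝ)) + (x.card : ℝ) ^ 2 -
        ∑ u ∈ x, ((x.filter fun v => u <+: v).card : ℝ) ^ 2 := by
  obtain ⟨e, he⟩ := hne
  have hnil : ([] : List ℕ+) ∈ x := h1 [] e (List.nil_prefix) he
  -- the nil count equals the cardinality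
  have hnilcount : (x.filter fun v => ([] : List ℕ+) <+: v) = x := by
    apply Finset.filter_true_of_mem
    intro v _; exact List.nil_prefix
  -- pointwise count identity
  have hkey : ∀ u ∈ x, ∀ v ∈ x, ((lcp u v).length : ℝ) =
      ∑ w ∈ x, (if w <+: u ∧ w <+: v ∧ w ≠ [] then (1 : ℝ) else 0) := by
    intro u hu v hv
    have hmem : ∀ w : List ℕ+, w <+: lcp u v → w ∈ x :=
      fun w hw => h1 w u (hw.trans (lcp_prefix_left u v)) hu
    have hc := count_prefixes x (lcp u v) hmem
    have hfil : (x.filter fun w => w <+: u ∧ w <+: v ∧ w ≠ []) =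
        (x.filter fun w => w <+: lcp u v ∧ w ≠ []) := by
      apply Finset.filter_congr
      intro w _
      rw [prefix_lcp_iff]
      tauto
    rw [Finset.sum_boole, hfil, hc]
  have part1 : (∑ u ∈ x, ∑ v ∈ x, ((lcp u v).length : ℝ)) =
      (∑ u ∈ x, ((x.filter fun v => u <+: v).card : ℝ) ^ 2) - (x.card : ℝ) ^ 2 := by
    have step1 : (∑ u ∈ x, ∑ v ∈ x, ((lcp u v).length : ℝ)) =
        ∑ w ∈ x, ∑ u ∈ x, ∑ v ∈ x,
          (if w <+: u ∧ w <+: v ∧ w ≠ [] then (1 : ℝ) else 0) := by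
      calc (∑ u ∈ x, ∑ v ∈ x, ((lcp u v).length : ℝ))
          = ∑ u ∈ x, ∑ v ∈ x, ∑ w ∈ x,
              (if w <+: u ∧ w <+: v ∧ w ≠ [] then (1 : ℝ) else 0) :=
            Finset.sum_congr rfl fun u hu =>
              Finset.sum_congr rfl fun v hv => hkey u hu v hv
        _ = ∑ u ∈ x, ∑ w ∈ x, ∑ v ∈ x,
              (if w <+: u ∧ w <+: v ∧ w ≠ [] then (1 : ℝ) else 0) :=
            Finset.sum_congr rfl fun u _ => Finset.sum_comm
        _ = ∑ w ∈ x, ∑ u ∈ x, ∑ v ∈ x,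
              (if w <+: u ∧ w <+: v ∧ w ≠ [] then (1 : ℝ) else 0) :=
            Finset.sum_comm
    have step2 : ∀ w ∈ x, (∑ u ∈ x, ∑ v ∈ x,
        (if w <+: u ∧ w <+: v ∧ w ≠ [] then (1 : ℝ) else 0)) =
        if w = [] then 0 else ((x.filter fun v => w <+: v).card : ℝ) ^ 2 := by
      intro w _
      by_cases hw : w = []
      · simp [hw]
      · rw [if_neg hw]
        have : ∀ u v : List ℕ+, (if w <+: u ∧ w <+: v ∧ w ≠ [] then (1 : ℝ) else 0) =
            (if w <+: u then (1 : ℝ) else 0) * (if w <+: v then (1 : ℝ) else 0) := by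
          intro u v
          by_cases h1' : w <+: u <;> by_cases h2' : w <+: v <;> simp [h1', h2', hw]
        simp_rw [this, ← Finset.mul_sum, ← Finset.sum_mul, Finset.sum_boole]
        ring
    rw [step1, Finset.sum_congr rfl step2]
    have erase_eq : (∑ w ∈ x, if w = [] then (0:ℝ) else ((x.filter fun v => w <+: v).card : ℝ) ^ 2)
        = ∑ w ∈ x.erase [], ((x.filter fun v => w <+: v).card : ℝ) ^ 2 := by
      rw [← Finset.sum_erase x (by simp : (if ([] : List ℕ+) = [] then (0:ℝ) else _) = 0)]
      apply Finset.sum_congr rfl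
      intro w hw
      rw [if_neg (Finset.ne_of_mem_erase hw)]
    rw [erase_eq]
    have total : (∑ w ∈ x, ((x.filter fun v => w <+: v).card : ℝ) ^ 2) =
        ((x.filter fun v => ([]:List ℕ+) <+: v).card : ℝ) ^ 2 +
        ∑ w ∈ x.erase [], ((x.filter fun v => w <+: v).card : ℝ) ^ 2 :=
      (Finset.add_sum_erase x _ hnil).symm
    rw [total, hnilcount]
    ring
  refine ⟨part1, ?_⟩
  have expand : (∑ u ∈ x, ∑ v ∈ x,
      ((u.length : ℝ) + (v.length : ℝ) - 2 * (lcp u v).length)) =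
      (∑ u ∈ x, ∑ v ∈ x, (u.length : ℝ)) + (∑ u ∈ x, ∑ v ∈ x, (v.length : ℝ))
        - 2 * (∑ u ∈ x, ∑ v ∈ x, ((lcp u v).length : ℝ)) := by
    rw [Finset.mul_sum]
    rw [← Finset.sum_add_distrib, ← Finset.sum_sub_distrib]
    apply Finset.sum_congr rfl
    intro u _
    rw [Finset.mul_sum]
    rw [← Finset.sum_add_distrib, ← Finset.sum_sub_distrib]
  have hA : (∑ u ∈ x, ∑ v ∈ x, (u.length : ℝ)) =
      (x.card : ℝ) * ∑ u ∈ x, (u.length : ℝ) := by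
    simp [Finset.sum_const, nsmul_eq_mul, Finset.mul_sum, mul_comm]
  have hB : (∑ u ∈ x, ∑ v ∈ x, (v.length : ℝ)) =
      (x.card : ℝ) * ∑ u ∈ x, (u.length : ℝ) := by
    simp [Finset.sum_const, nsmul_eq_mul]
  rw [expand, hA, hB, part1]
  ring
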